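/- Let S = B(1,2) with the twisted product x*y := φ(x̄)·φ²(ȳ), where φ is the automorphism of B(1,2) given by φ(u) = u, φ(v) = λu + v, φ(1) = 1, with λ ≠ 0, denoted S = B̄(1,2)_λ. Then the only nontrivial group grading on the superalgebra S, up to equivalence, is the main ℤ₂-grading. -/

import Mathlib

/-- for `S = B̄(1,2)_λ` with `λ ≠ 0` (the superalgebra `B(1,2)` with the
twisted product `x*y = φ(x̄)·φ²(ȳ)`, `φ(u) = u`, `φ(v) = λu + v`, `φ(1) = 1`), the only
nontrivial group grading, up to equivalence, is the main `ℤ₂`-grading: the nonzero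
homogeneous components of any nontrivial grading are exactly the even part `F1` and
the odd part `V`. -/
theorem B12lambda_only_main_grading {F S G : Type*} [Field F] [AddCommGroup S]
    [Module F S] [Group G] [DecidableEq G]
    (hchar : ringChar F = 3)
    (mul : S →ₗ[F] S →ₗ[F] S) (e : S) (V : Submodule F S) (b : S →ₗ[F] S →ₗ[F] F)
    (he : e ≠ 0)
    (hcompl : IsCompl (Submodule.span F {e}) V)
    (hV2 : Module.finrank F V = 2)
    (hunit : ∀ x : S, mul e x = x ∧ mul x e = x)
    (hmulV : ∀ u' ∈ V, ∀ v' ∈ V, mul u' v' = b u' v' • e)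
    (halt : ∀ u' ∈ V, b u' u' = 0)
    (hskew : ∀ u' ∈ V, ∀ v' ∈ V, b u' v' = - b v' u')
    (hnd : ∀ u' ∈ V, (∀ v' ∈ V, b u' v' = 0) → u' = 0)
    (hbeV : ∀ v' ∈ V, b e v' = 0 ∧ b v' e = 0)
    (u v : S) (hu : u ∈ V) (hv : v ∈ V) (huv : b u v = 1)
    (hbasis : Submodule.span F {u, v} = V)
    (lam : F) (hlam : lam ≠ 0)
    (φ : S →ₗ[F] S)
    (hφmul : ∀ x y : S, φ (mul x y) = mul (φ x) (φ y))
    (hφe : φ e = e) (hφu : φ u = u) (hφv : φ v = lam • u + v)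
    (γ : G → Submodule F S) (hint : DirectSum.IsInternal γ)
    (hsuper : ∀ g : G, γ g = (γ g ⊓ Submodule.span F {e}) ⊔ (γ g ⊓ V))
    (hstar : ∀ g h : G, ∀ x ∈ γ g, ∀ y ∈ γ h,
      mul (φ (b x e • e - x)) (φ (φ (b y e • e - y))) ∈ γ (g * h))
    (hnontrivial : ∀ g : G, γ g ≠ ⊤) :
    ∃ g₀ g₁ : G, g₀ ≠ g₁ ∧ γ g₀ = Submodule.span F {e} ∧ γ g₁ = V ∧
      ∀ g : G, g ≠ g₀ → g ≠ g₁ → γ g = ⊥ := by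
  classical
  -- basic bilinear-form values
  have huu : b u u = 0 := halt u hu
  have hvv : b v v = 0 := halt v hv
  have hvu : b v u = (-1 : F) := by rw [hskew v hv u hu, huv]
  have hVdisj : ∀ x : S, x ∈ Submodule.span F {e} → x ∈ V → x = 0 := fun x hx hx' =>
    Submodule.disjoint_def.mp hcompl.disjoint x hx hx'
  have heV : e ∉ V := fun h => he (hVdisj e (Submodule.mem_span_singleton_self e) h)
  have hind := hint.submodule_iSupIndep
  have htop := hint.submodule_iSup_eq_top
  have hdisj : ∀ g h : G, g ≠ h → ∀ x : S, x ∈ γ g → x ∈ γ h → x = 0 := by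
    intro g h hne x hxg hxh
    exact Submodule.disjoint_def.mp (hind.pairwiseDisjoint hne) x hxg hxh
  -- characteristic facts
  have h3 : ((3 : ℕ) : F) = 0 := (ringChar.spec F 3).mpr (by rw [hchar])
  have h3' : (3 : F) = 0 := by push_cast at h3; exact h3
  have htwo : (2 : F) ≠ 0 := by
    intro h
    have : (1 : F) = 0 := by linear_combination h3' - h
    exact one_ne_zero this
  -- u ≠ 0
  have hune : u ≠ 0 := by
    intro h
    have : b u v = 0 := by rw [h]; simp
    rw [huv] at this; exact one_ne_zero this
  -- membership helper
  have memV : ∀ a c : F, a • u + c • v ∈ V := fun a c =>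
    V.add_mem (V.smul_mem _ hu) (V.smul_mem _ hv)
  -- φ on V in coordinates
  have hφw : ∀ a c : F, φ (a • u + c • v) = (a + lam * c) • u + c • v := by
    intro a c
    rw [map_add, map_smul, map_smul, hφu, hφv, smul_add, smul_smul, add_smul,
      mul_comm c lam]
    abel
  -- b in coordinates
  have hbw : ∀ a c a' c' : F, b (a • u + c • v) (a' • u + c' • v) = a * c' - c * a' := by
    intro a c a' c'
    simp only [map_add, map_smul, LinearMap.add_apply, LinearMap.smul_apply,
      huu, hvv, huv, hvu, smul_eq_mul]
    ring
  -- the twisted product of homogeneous elements of V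
  have key : ∀ (g h : G) (a₁ c₁ a₂ c₂ : F),
      a₁ • u + c₁ • v ∈ γ g → a₂ • u + c₂ • v ∈ γ h →
      (a₁ * c₂ - a₂ * c₁ - lam * c₁ * c₂) • e ∈ γ (g * h) := by
    intro g h a₁ c₁ a₂ c₂ hx hy
    have hst := hstar g h _ hx _ hy
    have hbx : b (a₁ • u + c₁ • v) e = 0 := (hbeV _ (memV a₁ c₁)).2
    have hby : b (a₂ • u + c₂ • v) e = 0 := (hbeV _ (memV a₂ c₂)).2
    rw [hbx, hby, zero_smul, zero_sub, zero_sub] at hst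
    have heq : mul (φ (-(a₁ • u + c₁ • v))) (φ (φ (-(a₂ • u + c₂ • v))))
        = ((a₁ + lam * c₁) * c₂ - c₁ * (a₂ + lam * c₂ + lam * c₂)) • e := by
      simp only [map_neg, LinearMap.neg_apply, neg_neg]
      rw [hφw, hφw, hφw, hmulV _ (memV _ _) _ (memV _ _), hbw]
    rw [heq] at hst
    have hEq : (a₁ * c₂ - a₂ * c₁ - lam * c₁ * c₂)
        = ((a₁ + lam * c₁) * c₂ - c₁ * (a₂ + lam * c₂ + lam * c₂)) := by ring
    rw [hEq]
    exact hst
  -- existence of the component containing e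
  obtain ⟨g₀, hg₀⟩ : ∃ g₀, e ∈ γ g₀ := by
    by_contra hcon
    push_neg at hcon
    have hle : ∀ g, γ g ≤ V := by
      intro g
      have hEbot : γ g ⊓ Submodule.span F {e} = ⊥ := by
        rw [Submodule.eq_bot_iff]
        rintro x ⟨hx1, hx2⟩
        obtain ⟨c, hc⟩ := Submodule.mem_span_singleton.mp hx2
        by_cases hc0 : c = 0
        · rw [← hc, hc0, zero_smul]
        · exfalso
          apply hcon g
          have he' : e = c⁻¹ • x := by
            rw [← hc, smul_smul, inv_mul_cancel₀ hc0, one_smul]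
          rw [he']
          exact Submodule.smul_mem _ _ hx1
      rw [hsuper g, hEbot, bot_sup_eq]
      exact inf_le_right
    have hle' : (⊤ : Submodule F S) ≤ V := htop ▸ iSup_le hle
    exact heV (hle' Submodule.mem_top)
  have hunique : ∀ g, e ∈ γ g → g = g₀ := by
    intro g hg
    by_contra hne
    exact he (hdisj g g₀ hne e hg hg₀)
  have hscalar_e : ∀ (c : F) (g : G), c ≠ 0 → c • e ∈ γ g → g = g₀ := by
    intro c g hc hg
    apply hunique
    have he' : e = c⁻¹ • (c • e) := by rw [smul_smul, inv_mul_cancel₀ hc, one_smul]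
    rw [he']
    exact Submodule.smul_mem _ _ hg
  -- at most one component meets V nontrivially
  have hone : ∀ g₁ g₂ : G, g₁ ≠ g₂ → ∀ w₁ ∈ γ g₁ ⊓ V, ∀ w₂ ∈ γ g₂ ⊓ V,
      w₁ ≠ 0 → w₂ ≠ 0 → False := by
    intro g₁ g₂ hne w₁ hw₁ w₂ hw₂ h1 h2
    have hw₁V : w₁ ∈ Submodule.span F {u, v} := by rw [hbasis]; exact hw₁.2
    have hw₂V : w₂ ∈ Submodule.span F {u, v} := by rw [hbasis]; exact hw₂.2
    obtain ⟨a₁, c₁, h₁⟩ := Submodule.mem_span_pair.mp hw₁V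
    obtain ⟨a₂, c₂, h₂⟩ := Submodule.mem_span_pair.mp hw₂V
    have hxg : a₁ • u + c₁ • v ∈ γ g₁ := by rw [h₁]; exact hw₁.1
    have hyg : a₂ • u + c₂ • v ∈ γ g₂ := by rw [h₂]; exact hw₂.1
    by_cases hc₁ : c₁ = 0 <;> by_cases hc₂ : c₂ = 0
    · -- both in F·u : contradicts independence
      have ha₁ : a₁ ≠ 0 := by
        intro h; apply h1; rw [← h₁, h, hc₁, zero_smul, zero_smul, add_zero]
      have ha₂ : a₂ ≠ 0 := by
        intro h; apply h2; rw [← h₂, h, hc₂, zero_smul, zero_smul, add_zero]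
      have hu1 : u ∈ γ g₁ := by
        have : u = a₁⁻¹ • w₁ := by
          rw [← h₁, hc₁, zero_smul, add_zero, smul_smul, inv_mul_cancel₀ ha₁, one_smul]
        rw [this]; exact Submodule.smul_mem _ _ hw₁.1
      have hu2 : u ∈ γ g₂ := by
        have : u = a₂⁻¹ • w₂ := by
          rw [← h₂, hc₂, zero_smul, add_zero, smul_smul, inv_mul_cancel₀ ha₂, one_smul]
        rw [this]; exact Submodule.smul_mem _ _ hw₂.1
      exact hune (hdisj g₁ g₂ hne u hu1 hu2)
    · -- c₁ = 0, c₂ ≠ 0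
      have ha₁ : a₁ ≠ 0 := by
        intro h; apply h1; rw [← h₁, h, hc₁, zero_smul, zero_smul, add_zero]
      have k1 := key g₂ g₁ a₂ c₂ a₁ c₁ hyg hxg
      have k2 := key g₂ g₂ a₂ c₂ a₂ c₂ hyg hyg
      have e1 : g₂ * g₁ = g₀ := by
        apply hscalar_e _ _ _ k1
        rw [hc₁]
        intro h
        have : a₁ * c₂ = 0 := by linear_combination -h
        rcases mul_eq_zero.mp this with h' | h'
        exacts [ha₁ h', hc₂ h']
      have e2 : g₂ * g₂ = g₀ := by
        apply hscalar_e _ _ _ k2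
        intro h
        have : lam * c₂ * c₂ = 0 := by linear_combination -h
        rcases mul_eq_zero.mp this with h' | h'
        · rcases mul_eq_zero.mp h' with h'' | h''
          exacts [hlam h'', hc₂ h'']
        · exact hc₂ h'
      exact hne (mul_left_cancel (e1.trans e2.symm))
    · -- c₁ ≠ 0, c₂ = 0
      have ha₂ : a₂ ≠ 0 := by
        intro h; apply h2; rw [← h₂, h, hc₂, zero_smul, zero_smul, add_zero]
      have k1 := key g₁ g₂ a₁ c₁ a₂ c₂ hxg hyg
      have k2 := key g₁ g₁ a₁ c₁ a₁ c₁ hxg hxg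
      have e1 : g₁ * g₂ = g₀ := by
        apply hscalar_e _ _ _ k1
        rw [hc₂]
        intro h
        have : a₂ * c₁ = 0 := by linear_combination -h
        rcases mul_eq_zero.mp this with h' | h'
        exacts [ha₂ h', hc₁ h']
      have e2 : g₁ * g₁ = g₀ := by
        apply hscalar_e _ _ _ k2
        intro h
        have : lam * c₁ * c₁ = 0 := by linear_combination -h
        rcases mul_eq_zero.mp this with h' | h'
        · rcases mul_eq_zero.mp h' with h'' | h''
          exacts [hlam h'', hc₁ h'']
        · exact hc₁ h'
      exact hne (mul_left_cancel (e2.trans e1.symm))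
    · -- c₁ ≠ 0, c₂ ≠ 0
      have k1 := key g₁ g₁ a₁ c₁ a₁ c₁ hxg hxg
      have k2 := key g₂ g₂ a₂ c₂ a₂ c₂ hyg hyg
      have e1 : g₁ * g₁ = g₀ := by
        apply hscalar_e _ _ _ k1
        intro h
        have : lam * c₁ * c₁ = 0 := by linear_combination -h
        rcases mul_eq_zero.mp this with h' | h'
        · rcases mul_eq_zero.mp h' with h'' | h''
          exacts [hlam h'', hc₁ h'']
        · exact hc₁ h'
      have e2 : g₂ * g₂ = g₀ := by
        apply hscalar_e _ _ _ k2
        intro h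
        have : lam * c₂ * c₂ = 0 := by linear_combination -h
        rcases mul_eq_zero.mp this with h' | h'
        · rcases mul_eq_zero.mp h' with h'' | h''
          exacts [hlam h'', hc₂ h'']
        · exact hc₂ h'
      by_cases hP : (a₁ * c₂ - a₂ * c₁ - lam * c₁ * c₂) = 0
      · -- then the reversed product is nonzero
        have k3 := key g₂ g₁ a₂ c₂ a₁ c₁ hyg hxg
        have e3 : g₂ * g₁ = g₀ := by
          apply hscalar_e _ _ _ k3
          intro h
          have h2' : (2 : F) * (lam * c₁ * c₂) = 0 := by linear_combination -hP - h
          rcases mul_eq_zero.mp h2' with h' | h'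
          · exact htwo h'
          · rcases mul_eq_zero.mp h' with h'' | h''
            · rcases mul_eq_zero.mp h'' with h3 | h3
              exacts [hlam h3, hc₁ h3]
            · exact hc₂ h''
        exact hne (mul_left_cancel (e3.trans e2.symm))
      · have k3 := key g₁ g₂ a₁ c₁ a₂ c₂ hxg hyg
        have e3 : g₁ * g₂ = g₀ := hscalar_e _ _ hP k3
        exact hne (mul_left_cancel (e1.trans e3.symm))
  -- the V-parts sum to V
  have hTV : (⨆ g, γ g ⊓ V) = V := by
    apply le_antisymm (iSup_le fun g => inf_le_right)
    intro x hxV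
    have h1 : (⊤ : Submodule F S) ≤ Submodule.span F {e} ⊔ (⨆ g, γ g ⊓ V) := by
      rw [← htop]
      apply iSup_le
      intro g
      rw [hsuper g]
      exact sup_le (le_sup_of_le_left inf_le_right)
        (le_sup_of_le_right (le_iSup (fun g => γ g ⊓ V) g))
    obtain ⟨p, hp, q, hq, hpq⟩ := Submodule.mem_sup.mp (h1 Submodule.mem_top :
      x ∈ Submodule.span F {e} ⊔ (⨆ g, γ g ⊓ V))
    have hqV : q ∈ V := (iSup_le fun g => inf_le_right : (⨆ g, γ g ⊓ V) ≤ V) hq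
    have hpV : p ∈ V := by
      have hp' : p = x - q := by rw [← hpq]; abel
      rw [hp']
      exact V.sub_mem hxV hqV
    have hp0 : p = 0 := hVdisj p hp hpV
    rw [← hpq, hp0, zero_add]
    exact hq
  -- there is a component containing all of V
  obtain ⟨g₁, hg₁⟩ : ∃ g₁, γ g₁ ⊓ V ≠ ⊥ := by
    by_contra hcon
    push_neg at hcon
    have : (⨆ g, γ g ⊓ V) = ⊥ := by simp [hcon]
    rw [hTV] at this
    exact hune (by rw [← Submodule.mem_bot (R := F), ← this]; exact hu)
  have hbotV : ∀ g, g ≠ g₁ → γ g ⊓ V = ⊥ := by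
    intro g hgne
    by_contra hgb
    obtain ⟨w₁, hw₁, hw₁0⟩ := Submodule.exists_mem_ne_zero_of_ne_bot hg₁
    obtain ⟨w₂, hw₂, hw₂0⟩ := Submodule.exists_mem_ne_zero_of_ne_bot hgb
    exact hone g₁ g (Ne.symm hgne) w₁ hw₁ w₂ hw₂ hw₁0 hw₂0
  have hVle : V ≤ γ g₁ := by
    rw [← hTV]
    apply iSup_le
    intro g
    by_cases hgg : g = g₁
    · rw [hgg]; exact inf_le_left
    · rw [hbotV g hgg]; exact bot_le
  have hEle : Submodule.span F {e} ≤ γ g₀ :=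
    Submodule.span_le.mpr (Set.singleton_subset_iff.mpr hg₀)
  have hg01 : g₀ ≠ g₁ := by
    intro h
    apply hnontrivial g₀
    apply le_antisymm le_top
    rw [← hcompl.codisjoint.eq_top]
    exact sup_le hEle (h ▸ hVle)
  have hEbot : ∀ g, g ≠ g₀ → γ g ⊓ Submodule.span F {e} = ⊥ := by
    intro g hgne
    rw [Submodule.eq_bot_iff]
    rintro x ⟨hx1, hx2⟩
    obtain ⟨c, hc⟩ := Submodule.mem_span_singleton.mp hx2
    by_cases hc0 : c = 0
    · rw [← hc, hc0, zero_smul]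
    · exact absurd (hscalar_e c g hc0 (hc ▸ hx1)) hgne
  refine ⟨g₀, g₁, hg01, ?_, ?_, ?_⟩
  · apply le_antisymm _ hEle
    rw [hsuper g₀, hbotV g₀ hg01]
    exact sup_le inf_le_right bot_le
  · apply le_antisymm _ hVle
    rw [hsuper g₁, hEbot g₁ (Ne.symm hg01)]
    exact sup_le bot_le inf_le_right
  · intro g hgg₀ hgg₁
    rw [hsuper g, hbotV g hgg₁, hEbot g hgg₀, sup_bot_eq]
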